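/- arXiv:2106.01989 — 7 statements merged into one kernel-verified Lean document; each statement's English description precedes it below -/
import Mathlib

section
/- For n ≥ 2, all complex roots of the polynomial x^3 - (n+2)x^2 + (2n-1)x + 1 are real. -/
theorem roots_real (n : ℤ) (hn : 2 ≤ n) (z : ℂ)
    (hz : z ^ 3 - ((n : ℂ) + 2) * z ^ 2 + (2 * (n : ℂ) - 1) * z + 1 = 0) :
    z.im = 0 := by
  by_contra hb
  set a := z.re with ha
  set b := z.im with hbdef
  set m := (n : ℝ) with hm
  have hzab : z = (a : ℂ) + (b : ℂ) * Complex.I := (Complex.re_add_im z).symm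
  rw [hzab] at hz
  have hre := congrArg Complex.re hz
  have him := congrArg Complex.im hz
  simp [Complex.add_re, Complex.add_im, Complex.sub_re, Complex.sub_im, Complex.mul_re,
    Complex.mul_im, pow_succ, Complex.one_re, Complex.one_im,
    Complex.I_re, Complex.I_im, Complex.ofReal_re, Complex.ofReal_im] at hre him
  -- E2 = 0 : real part
  have hE2 : a^3 - 3*a*b^2 - (m+2)*(a^2 - b^2) + (2*m-1)*a + 1 = 0 := by
    linear_combination hre
  -- imaginary part factored
  have him' : b * (3*a^2 - b^2 - 2*(m+2)*a + (2*m-1)) = 0 := by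
    linear_combination him
  have hE1 : b^2 - (3*a^2 - 2*(m+2)*a + (2*m-1)) = 0 := by
    rcases mul_eq_zero.mp him' with h | h
    · exact absurd h hb
    · linarith
  have key : (4*m^4 - 16*m^3 + 37*m^2 - 42*m + 49)
      + 4*b^2*((3*a - m - 2)^2 + b^2)^2 = 0 := by
    linear_combination
      (-13 + 75*m + 42*m^2 + 4*m^3 - 162*a - 324*a*m - 54*a*m^2 + 432*a^2 + 216*a^2*m
        - 216*a^3) * hE2 +
      (62 + 7*m + 9*m^2 - 2*m^3 + 28*b^2 + 40*b^2*m + 8*b^2*m^2 + 4*b^4 - 99*a + 75*a*m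
        + 46*a*m^2 + 2*a*m^3 - 112*a*b^2 - 56*a*b^2*m - 38*a^2 - 236*a^2*m - 26*a^2*m^2
        + 84*a^2*b^2 + 192*a^3 + 96*a^3*m - 72*a^4) * hE1
  have hm2 : (2:ℝ) ≤ m := by rw [hm]; exact_mod_cast hn
  have hpos : 0 < 4*m^4 - 16*m^3 + 37*m^2 - 42*m + 49 := by nlinarith [mul_nonneg (pow_nonneg (by linarith : (0:ℝ) ≤ m) 3) (by linarith : (0:ℝ) ≤ m - 2), sq_nonneg (37*m - 21)]
  have hnn : 0 ≤ 4*b^2*((3*a - m - 2)^2 + b^2)^2 := by positivity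
  linarith
end

section
/- Let α₁,…,α_k be real numbers with |α_i| ≠ 1 for all i, and suppose ∏_{i=1}^k |1 - α_i²| > 1. Then for every integer m > 2, ∏_{i=1}^k |1 - α_i^m| > ∏_{i=1}^k |1 - α_i²| > 1. -/
lemma key_le (a : ℝ) (ha : |a| ≠ 1) (m : ℕ) (hm : 2 < m) :
    |1 - a ^ 2| ≤ |1 - a ^ m| := by
  rcases lt_or_gt_of_ne ha with h | h
  · -- |a| < 1
    have h2 : |a| ^ m ≤ |a| ^ 2 := pow_le_pow_of_le_one (abs_nonneg a) h.le (by omega)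
    have h3 : |a ^ m| = |a| ^ m := abs_pow a m
    have h4 : 1 - |a ^ m| ≤ |1 - a ^ m| := by
      have := abs_sub_abs_le_abs_sub (1 : ℝ) (a ^ m)
      simpa using this
    have h5 : |1 - a ^ 2| = 1 - a ^ 2 := by
      rw [abs_of_nonneg]
      nlinarith [sq_abs a, abs_nonneg a]
    nlinarith [sq_abs a, abs_nonneg a]
  · -- 1 < |a|
    have h2 : |a| ^ 2 ≤ |a| ^ m := pow_le_pow_right₀ h.le (by omega)
    have h3 : |a ^ m| = |a| ^ m := abs_pow a m
    have h4 : |a ^ m| - 1 ≤ |1 - a ^ m| := by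
      have := abs_sub_abs_le_abs_sub (a ^ m) (1 : ℝ)
      rw [abs_sub_comm] at this
      simpa using this
    have h5 : |1 - a ^ 2| = a ^ 2 - 1 := by
      rw [abs_of_nonpos] <;> nlinarith [sq_abs a]
    nlinarith [sq_abs a]

lemma key_lt (a : ℝ) (h : 1 < |a|) (m : ℕ) (hm : 2 < m) :
    |1 - a ^ 2| < |1 - a ^ m| := by
  have h2 : |a| ^ 2 < |a| ^ m := pow_lt_pow_right₀ h (by omega)
  have h3 : |a ^ m| = |a| ^ m := abs_pow a m
  have h4 : |a ^ m| - 1 ≤ |1 - a ^ m| := by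
    have := abs_sub_abs_le_abs_sub (a ^ m) (1 : ℝ)
    rw [abs_sub_comm] at this
    simpa using this
  have h5 : |1 - a ^ 2| = a ^ 2 - 1 := by
    rw [abs_of_nonpos] <;> nlinarith [sq_abs a]
  nlinarith [sq_abs a]

theorem prod_increasing (k : ℕ) (hk : 1 ≤ k) (α : Fin k → ℝ)
    (hα : ∀ i, |α i| ≠ 1) (hprod : 1 < ∏ i, |1 - α i ^ 2|) :
    ∀ m : ℕ, 2 < m →
      (∏ i, |1 - α i ^ 2|) < ∏ i, |1 - α i ^ m| ∧ 1 < ∏ i, |1 - α i ^ 2| := by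
  intro m hm
  refine ⟨?_, hprod⟩
  have hpos : ∀ i ∈ Finset.univ, 0 < |1 - α i ^ 2| := by
    intro i _
    rw [abs_pos]
    intro h
    apply hα i
    have : α i ^ 2 = 1 := by linarith
    have := sq_abs (α i)
    nlinarith [abs_nonneg (α i)]
  have hex : ∃ i ∈ Finset.univ, 1 < |1 - α i ^ 2| := by
    by_contra hc
    push_neg at hc
    have := Finset.prod_le_one (fun i hi => (hpos i hi).le) (fun i hi => hc i hi)
    linarith
  obtain ⟨i, hi, hgt⟩ := hex
  have hai : 1 < |α i| := by
    by_contra hc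
    push_neg at hc
    have h1 : α i ^ 2 ≤ 1 := by nlinarith [sq_abs (α i), abs_nonneg (α i)]
    have h2 : (0:ℝ) ≤ α i ^ 2 := sq_nonneg _
    rw [abs_of_nonneg (by linarith)] at hgt
    linarith
  exact Finset.prod_lt_prod hpos (fun j _ => key_le (α j) (hα j) m hm)
    ⟨i, hi, key_lt (α i) hai m hm⟩
end

section
/- For n ≥ 2 and m ≥ 2, |det(I - A^m)| ≥ 3n² - 2n - 1 > 1, where A = [[n,1,0],[1,1,1],[0,1,1]]. In particular the cokernel of I - A^m (as a map ℤ³ → ℤ³) is a finite group of order at least 3n² - 2n - 1. -/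
open Matrix

/-! Auxiliary definitions -/

def Amat (n : ℤ) : Matrix (Fin 3) (Fin 3) ℤ := !![n, 1, 0; 1, 1, 1; 0, 1, 1]
def Cmat (n : ℤ) : Matrix (Fin 3) (Fin 3) ℤ := !![0,-1,1;-1,n,-n;1,-n,n-1]

/-! ### Cokernel cardinality for an integer matrix with nonzero determinant -/

lemma card_coker (M : Matrix (Fin 3) (Fin 3) ℤ) (hM : M.det ≠ 0) :
    Finite ((Fin 3 → ℤ) ⧸ LinearMap.range (Matrix.toLin' M)) ∧
    Nat.card ((Fin 3 → ℤ) ⧸ LinearMap.range (Matrix.toLin' M)) = M.det.natAbs := by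
  set N := LinearMap.range (Matrix.toLin' M) with hNdef
  have hinj : Function.Injective (Matrix.toLin' M) := by
    intro x y h
    have h0 : M.mulVec (x - y) = 0 := by
      have := sub_eq_zero.mpr h
      simpa [Matrix.toLin'_apply, Matrix.mulVec_sub] using this
    exact sub_eq_zero.mp (Matrix.eq_zero_of_mulVec_eq_zero hM h0)
  let e : (Fin 3 → ℤ) ≃ₗ[ℤ] N := LinearEquiv.ofInjective _ hinj
  have he : ∀ x, (e x : Fin 3 → ℤ) = Matrix.toLin' M x := fun x => rfl
  have hidx : N.toAddSubgroup.index ≠ 0 :=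
    Int.submodule_toAddSubgroup_index_ne_zero_iff.mpr ⟨e.symm⟩
  have hcard : Nat.card ((Fin 3 → ℤ) ⧸ N) = N.toAddSubgroup.index :=
    (Submodule.cardQuot_apply N).symm
  have hfin : Finite ((Fin 3 → ℤ) ⧸ N) := by
    rw [hcard] at *
    exact (Nat.card_ne_zero.mp hidx).2
  refine ⟨hfin, ?_⟩
  rw [hcard]
  -- Smith normal form computation of the index
  obtain ⟨k, snf⟩ := N.smithNormalForm (Pi.basisFun ℤ (Fin 3))
  have hk : k = 3 := by simpa using snf.toAddSubgroup_index_ne_zero_iff.mp hidx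
  subst hk
  have hfb : Function.Bijective snf.f :=
    ⟨snf.f.injective, Finite.surjective_of_injective snf.f.injective⟩
  let σ : Fin 3 ≃ Fin 3 := Equiv.ofBijective snf.f hfb
  let e2 : (Fin 3 → ℤ) ≃ₗ[ℤ] N := snf.bM.equiv snf.bN σ.symm
  have hmat : LinearMap.toMatrix snf.bM snf.bM (N.subtype ∘ₗ (e2 : (Fin 3 → ℤ) →ₗ[ℤ] N))
      = Matrix.diagonal (fun i => snf.a (σ.symm i)) := by
    ext i j
    have happ : (N.subtype ∘ₗ (e2 : (Fin 3 → ℤ) →ₗ[ℤ] N)) (snf.bM j)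
        = snf.a (σ.symm j) • snf.bM j := by
      have h1 : e2 (snf.bM j) = snf.bN (σ.symm j) := snf.bM.equiv_apply _ _ _
      simp only [LinearMap.comp_apply, LinearEquiv.coe_coe, Submodule.subtype_apply, h1]
      rw [snf.snf]
      congr 2
      exact σ.apply_symm_apply j
    rw [LinearMap.toMatrix_apply, happ, LinearEquiv.map_smul, Module.Basis.repr_self]
    by_cases h : i = j
    · subst h; simp
    · simp [Matrix.diagonal_apply_ne _ h, Finsupp.single_eq_of_ne (Ne.symm h), h]
  have hdet2 : (LinearMap.det (N.subtype ∘ₗ (e2 : (Fin 3 → ℤ) →ₗ[ℤ] N))).natAbs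
      = ∏ i : Fin 3, (snf.a i).natAbs := by
    rw [← LinearMap.det_toMatrix snf.bM, hmat, Matrix.det_diagonal,
      ← Equiv.prod_comp σ.symm (fun i => (snf.a i).natAbs)]
    exact map_prod Int.natAbsHom _ Finset.univ
  have hdet1 : LinearMap.det (N.subtype ∘ₗ (e : (Fin 3 → ℤ) →ₗ[ℤ] N)) = M.det := by
    have h1 : N.subtype ∘ₗ (e : (Fin 3 → ℤ) →ₗ[ℤ] N) = Matrix.toLin' M :=
      LinearMap.ext fun x => he x
    rw [h1, LinearMap.det_toLin']
  have hassoc := LinearMap.associated_det_comp_equiv (N.subtype) e e2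
  have hdets : M.det.natAbs = ∏ i : Fin 3, (snf.a i).natAbs := by
    rw [← hdet1, ← hdet2]
    exact Int.natAbs_eq_iff_associated.mpr hassoc
  rw [snf.toAddSubgroup_index_eq_pow_mul_prod, hdets]
  simp only [Ideal.span_singleton_toAddSubgroup_eq_zmultiples, Int.index_zmultiples]
  simp

/-! ### Determinant, adjugate and trace computations -/

lemma det_one_sub (B : Matrix (Fin 3) (Fin 3) ℤ) :
    (1 - B).det = 1 - B.trace + B.adjugate.trace - B.det := by
  have h1 : (1 - B) = !![1 - B 0 0, -B 0 1, -B 0 2; -B 1 0, 1 - B 1 1, -B 1 2;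
      -B 2 0, -B 2 1, 1 - B 2 2] := by
    ext i j
    fin_cases i <;> fin_cases j <;> simp [Matrix.one_apply]
  rw [h1, Matrix.trace_fin_three, Matrix.adjugate_fin_three, Matrix.trace_fin_three]
  simp [Matrix.det_fin_three]
  ring

lemma adjA (n : ℤ) : (Amat n).adjugate = Cmat n := by
  rw [Amat, Cmat, Matrix.adjugate_fin_three]
  ext i j
  fin_cases i <;> fin_cases j <;> simp [Matrix.vecHead, Matrix.vecTail]

lemma detA (n : ℤ) : (Amat n).det = -1 := by
  rw [Amat]
  simp [Matrix.det_fin_three, Matrix.vecHead, Matrix.vecTail]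

lemma A_cube (n : ℤ) : (Amat n)^3 + (2*n-1) • (Amat n) + 1 = (n+2) • (Amat n)^2 := by
  rw [Amat, pow_succ, pow_succ, pow_one]
  ext i j
  fin_cases i <;> fin_cases j <;>
    simp [Matrix.mul_apply, Fin.sum_univ_three, Matrix.one_apply,
      Matrix.vecHead, Matrix.vecTail] <;> ring

set_option maxHeartbeats 1000000 in
lemma C_cube (n : ℤ) : (Cmat n)^3 = (2*n-1) • (Cmat n)^2 + (n+2) • (Cmat n) + 1 := by
  rw [Cmat, pow_succ, pow_succ, pow_one]
  ext i j
  fin_cases i <;> fin_cases j <;>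
    simp [Matrix.mul_apply, Fin.sum_univ_three, Matrix.one_apply,
      Matrix.vecHead, Matrix.vecTail] <;> ring

lemma T0 (n : ℤ) : ((Amat n)^0).trace = 3 := by simp [Matrix.trace_fin_three]
lemma T1 (n : ℤ) : ((Amat n)^1).trace = n + 2 := by
  simp [Amat, Matrix.trace_fin_three, Matrix.vecHead, Matrix.vecTail]; ring
lemma T2 (n : ℤ) : ((Amat n)^2).trace = n^2 + 6 := by
  rw [pow_two, Amat]
  simp [Matrix.trace_fin_three, Matrix.mul_apply, Fin.sum_univ_three,
    Matrix.vecHead, Matrix.vecTail]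
  ring
lemma V0 (n : ℤ) : ((Cmat n)^0).trace = 3 := by simp [Matrix.trace_fin_three]
lemma V1 (n : ℤ) : ((Cmat n)^1).trace = 2*n - 1 := by
  simp [Cmat, Matrix.trace_fin_three, Matrix.vecHead, Matrix.vecTail]; ring
lemma V2 (n : ℤ) : ((Cmat n)^2).trace = 4*n^2 - 2*n + 5 := by
  rw [pow_two, Cmat]
  simp [Matrix.trace_fin_three, Matrix.mul_apply, Fin.sum_univ_three,
    Matrix.vecHead, Matrix.vecTail]
  ring

lemma Trec (n : ℤ) (m : ℕ) : ((Amat n)^(m+3)).trace + (2*n-1) * ((Amat n)^(m+1)).trace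
    + ((Amat n)^m).trace = (n+2) * ((Amat n)^(m+2)).trace := by
  have h := congrArg (fun X => (Amat n)^m * X) (A_cube n)
  simp only [mul_add, mul_one, mul_smul_comm, ← pow_add, ← pow_succ] at h
  have h2 := congrArg Matrix.trace h
  simp only [Matrix.trace_add, Matrix.trace_smul, smul_eq_mul] at h2
  convert h2 using 2 <;> norm_num

lemma Vrec (n : ℤ) (m : ℕ) : ((Cmat n)^(m+3)).trace
    = (2*n-1) * ((Cmat n)^(m+2)).trace + (n+2) * ((Cmat n)^(m+1)).trace
      + ((Cmat n)^m).trace := by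
  have h := congrArg (fun X => (Cmat n)^m * X) (C_cube n)
  simp only [mul_add, mul_one, mul_smul_comm, ← pow_add, ← pow_succ] at h
  have h2 := congrArg Matrix.trace h
  simp only [Matrix.trace_add, Matrix.trace_smul, smul_eq_mul] at h2
  convert h2 using 2 <;> norm_num

/-! ### Growth estimates for the trace sequences -/

def Tt (n : ℤ) (m : ℕ) : ℤ := ((Amat n)^m).trace
def Vv (n : ℤ) (m : ℕ) : ℤ := ((Cmat n)^m).trace

section
variable {n : ℤ}

theorem Tb (hn : 2 ≤ n) : ∀ m : ℕ,
    (0 < Tt n (m+1) ∧ 2*Tt n (m+1) ≤ Tt n (m+2) ∧ Tt n (m+2) ≤ (n+1)*Tt n (m+1)) ∧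
    (0 < Tt n (m+2) ∧ 2*Tt n (m+2) ≤ Tt n (m+3) ∧ Tt n (m+3) ≤ (n+1)*Tt n (m+2))
  | 0 => by
    have h1 := T1 n; have h2 := T2 n; have h0 := T0 n
    have h3 := Trec n 0
    simp only [Nat.zero_add] at *
    simp only [Tt]
    refine ⟨⟨by nlinarith, by nlinarith, by nlinarith⟩,
      ⟨by nlinarith, by nlinarith, by nlinarith⟩⟩
  | (m+1) => by
    obtain ⟨⟨hp1, hg1, hu1⟩, ⟨hp2, hg2, hu2⟩⟩ := Tb hn m
    have hrec := Trec n (m+1)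
    simp only [Tt, show ∀ k:ℕ, m+1+k = m+(1+k) from fun k => by omega] at *
    exact ⟨⟨hp2, hg2, hu2⟩, ⟨by nlinarith, by nlinarith, by nlinarith⟩⟩

theorem Vb (hn : 2 ≤ n) : ∀ m : ℕ,
    0 < Vv n m ∧ 0 < Vv n (m+1) ∧ 0 < Vv n (m+2) ∧ (2*n-1) * Vv n (m+2) ≤ Vv n (m+3)
  | 0 => by
    have h0 := V0 n; have h1 := V1 n; have h2 := V2 n
    have h3 := Vrec n 0
    simp only [Nat.zero_add] at *
    simp only [Vv]
    refine ⟨by nlinarith, by nlinarith, by nlinarith, by nlinarith⟩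
  | (m+1) => by
    obtain ⟨hp0, hp1, hp2, hg⟩ := Vb hn m
    have hrec := Vrec n (m+1)
    simp only [Vv, show ∀ k:ℕ, m+1+k = m+(1+k) from fun k => by omega] at *
    refine ⟨hp1, hp2, by nlinarith, by nlinarith⟩

theorem Wmain (hn : 2 ≤ n) : ∀ k : ℕ,
    3*n^2 - 2*n - 1 ≤ Vv n (k+2) - Tt n (k+2)
  | 0 => by
    have h2 := T2 n; have hv2 := V2 n
    simp only [Tt, Vv, Nat.zero_add]
    linarith
  | (k+1) => by
    have ih := Wmain hn k
    obtain ⟨⟨hp1, hg1, hu1⟩, _⟩ := Tb hn (k+1)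
    obtain ⟨_, _, hvp, hvg⟩ := Vb hn k
    have e1 : k+1+1 = k+2 := rfl
    have e2 : k+1+2 = k+3 := rfl
    rw [e1, e2] at *
    nlinarith [mul_nonneg (by linarith : (0:ℤ) ≤ n - 2) (le_of_lt hvp),
      mul_nonneg (by linarith : (0:ℤ) ≤ n + 1)
        (by linarith : (0:ℤ) ≤ Vv n (k+2) - Tt n (k+2) - (3*n^2-2*n-1))]

end

/-! ### The determinant lower bound -/

lemma det_lower (n : ℤ) (hn : 2 ≤ n) (m : ℕ) (hm : 2 ≤ m) :
    3 * n ^ 2 - 2 * n - 1 ≤ (1 - (Amat n) ^ m).det := by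
  have hdet : (1 - (Amat n)^m).det
      = 1 - Tt n m + Vv n m - (-1)^m := by
    rw [det_one_sub, Matrix.adjugate_pow, adjA, Matrix.det_pow, detA]
    rfl
  obtain ⟨k, rfl⟩ : ∃ k, m = k + 2 := ⟨m - 2, by omega⟩
  have hW := Wmain hn k
  have hsgn : ((-1:ℤ))^(k+2) ≤ 1 := by
    rcases Nat.even_or_odd (k+2) with h | h
    · rw [h.neg_one_pow]
    · rw [h.neg_one_pow]; norm_num
  rw [hdet]
  linarith

theorem coker_lower_bound (n : ℤ) (hn : 2 ≤ n) (m : ℕ) (hm : 2 ≤ m) :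
    3 * n ^ 2 - 2 * n - 1 ≤
      |(1 - (!![n, 1, 0; 1, 1, 1; 0, 1, 1] : Matrix (Fin 3) (Fin 3) ℤ) ^ m).det| ∧
    1 < 3 * n ^ 2 - 2 * n - 1 ∧
    Finite ((Fin 3 → ℤ) ⧸ LinearMap.range (Matrix.toLin'
      (1 - (!![n, 1, 0; 1, 1, 1; 0, 1, 1] : Matrix (Fin 3) (Fin 3) ℤ) ^ m))) ∧
    3 * n ^ 2 - 2 * n - 1 ≤
      (Nat.card ((Fin 3 → ℤ) ⧸ LinearMap.range (Matrix.toLin'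
        (1 - (!![n, 1, 0; 1, 1, 1; 0, 1, 1] : Matrix (Fin 3) (Fin 3) ℤ) ^ m))) : ℤ) := by
  have hA : (!![n, 1, 0; 1, 1, 1; 0, 1, 1] : Matrix (Fin 3) (Fin 3) ℤ) = Amat n := rfl
  rw [hA]
  have hd := det_lower n hn m hm
  have hbig : (1:ℤ) < 3 * n ^ 2 - 2 * n - 1 := by nlinarith
  have hpos : (0:ℤ) < (1 - (Amat n) ^ m).det := by linarith
  have hne : (1 - (Amat n) ^ m).det ≠ 0 := ne_of_gt hpos
  obtain ⟨hfin, hcard⟩ := card_coker _ hne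
  refine ⟨le_trans hd (le_abs_self _), hbig, hfin, ?_⟩
  rw [hcard]
  rw [Int.natCast_natAbs]
  exact le_trans hd (le_abs_self _)
end

section
/- Let n, m ≥ 2 and let I = ⟨x^m - 1, ξ_n(x)⟩ ⊆ ℤ[x] where ξ_n(x) = x³ + (2n-1)x² - (n+2)x + 1. If (1-nx)² ∈ I, then (n-1)² ∈ I, (n+1)x - 2 ∈ I, and (x-1)² ∈ I. -/
open Polynomial

theorem steps_membership (n m : ℕ) (hn : 2 ≤ n) (hm : 2 ≤ m)
    (h : ((1 : ℤ[X]) - C (n : ℤ) * X) ^ 2 ∈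
      Ideal.span {(X : ℤ[X]) ^ m - 1,
        X ^ 3 + C (2 * (n : ℤ) - 1) * X ^ 2 - C ((n : ℤ) + 2) * X + 1}) :
    C (((n : ℤ) - 1) ^ 2) ∈
        Ideal.span {(X : ℤ[X]) ^ m - 1,
          X ^ 3 + C (2 * (n : ℤ) - 1) * X ^ 2 - C ((n : ℤ) + 2) * X + 1} ∧
      C ((n : ℤ) + 1) * X - 2 ∈
        Ideal.span {(X : ℤ[X]) ^ m - 1,
          X ^ 3 + C (2 * (n : ℤ) - 1) * X ^ 2 - C ((n : ℤ) + 2) * X + 1} ∧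
      ((X : ℤ[X]) - 1) ^ 2 ∈
        Ideal.span {(X : ℤ[X]) ^ m - 1,
          X ^ 3 + C (2 * (n : ℤ) - 1) * X ^ 2 - C ((n : ℤ) + 2) * X + 1} := by
  set c : ℤ[X] := C (n : ℤ) with hc
  set ξ : ℤ[X] := X ^ 3 + C (2 * (n : ℤ) - 1) * X ^ 2 - C ((n : ℤ) + 2) * X + 1 with hξdef
  set I : Ideal ℤ[X] := Ideal.span {(X : ℤ[X]) ^ m - 1, ξ} with hI
  have hξ : ξ ∈ I := Ideal.subset_span (Set.mem_insert_of_mem _ rfl)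
  have hξc : ξ = X ^ 3 + (2 * c - 1) * X ^ 2 - (c + 2) * X + 1 := by
    rw [hξdef, hc]; simp [map_sub, map_add, map_mul, map_ofNat]
  have hv2 : C (((n : ℤ) - 1) ^ 2) ∈ I := by
    have key : C (((n : ℤ) - 1) ^ 2) =
        ((4 * c ^ 3 - 3 * c ^ 4 + 2 * c ^ 5 - c ^ 6) +
            X * (-3 * c ^ 4 + 2 * c ^ 5 - 2 * c ^ 6 + c ^ 7)) * ξ +
          ((c ^ 6 - 2 * c ^ 5 + 3 * c ^ 4 - 4 * c ^ 3 + c ^ 2 - 2 * c + 1) +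
              X * (-2 * c ^ 6 + 5 * c ^ 5 - 7 * c ^ 4 + 10 * c ^ 3 - 4 * c ^ 2 + 2 * c) +
              X ^ 2 * (-c ^ 5 + 2 * c ^ 4 - 2 * c ^ 3 + 3 * c ^ 2)) *
            ((1 : ℤ[X]) - c * X) ^ 2 := by
      rw [hξc, hc]; simp only [map_sub, map_add, map_mul, map_pow, map_one]; ring
    rw [key]
    exact I.add_mem (I.mul_mem_left _ hξ) (I.mul_mem_left _ h)
  refine ⟨hv2, ?_, ?_⟩
  · have key : C ((n : ℤ) + 1) * X - 2 =
        (3 * c - 2) * ξ + (-3 * c - c * X) * ((1 : ℤ[X]) - c * X) ^ 2 +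
          (-3 * X - 2 * X ^ 2 + 2 * X ^ 3 + 3 * c * X ^ 2 + c * X ^ 3) *
            C (((n : ℤ) - 1) ^ 2) := by
      rw [hξc, hc]; simp only [map_sub, map_add, map_mul, map_pow, map_one]; ring
    rw [key]
    exact I.add_mem (I.add_mem (I.mul_mem_left _ hξ) (I.mul_mem_left _ h))
      (I.mul_mem_left _ hv2)
  · have key : ((X : ℤ[X]) - 1) ^ 2 =
        (1 - c) * ξ + (c - X + c * X) * ((1 : ℤ[X]) - c * X) ^ 2 +
          (X + 2 * X ^ 2 - X ^ 3 - c * X ^ 2 - c * X ^ 3) * C (((n : ℤ) - 1) ^ 2) := by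
      rw [hξc, hc]; simp only [map_sub, map_add, map_mul, map_pow, map_one]; ring
    rw [key]
    exact I.add_mem (I.add_mem (I.mul_mem_left _ hξ) (I.mul_mem_left _ h))
      (I.mul_mem_left _ hv2)
end

section
/- Let n, m ≥ 2 and I = ⟨x^m - 1, ξ_n(x)⟩ ⊆ ℤ[x] with ξ_n(x) = x³ + (2n-1)x² - (n+2)x + 1. If (1-nx)² ∈ I, then I = ⟨(x-1)², m(x-1), (3n-1)(x-1) + (n-1)⟩. -/
open Polynomial

/-- `X^m - 1 = m*(X-1) + (X-1)^2 * q` for some `q`. -/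
lemma pow_sub_one_key (m : ℕ) :
    ∃ q : ℤ[X], (X : ℤ[X]) ^ m - 1 = C (m : ℤ) * (X - 1) + (X - 1) ^ 2 * q := by
  induction m with
  | zero => exact ⟨0, by simp⟩
  | succ m ih =>
    obtain ⟨q, hq⟩ := ih
    refine ⟨X * q + C (m : ℤ), ?_⟩
    have : ((m + 1 : ℕ) : ℤ) = (m : ℤ) + 1 := by push_cast; ring
    rw [this, pow_succ, map_add, map_one]
    linear_combination (X : ℤ[X]) * hq

theorem ideal_characterization (n m : ℕ) (hn : 2 ≤ n) (hm : 2 ≤ m)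
    (h : ((1 : ℤ[X]) - C (n : ℤ) * X) ^ 2 ∈
      Ideal.span {(X : ℤ[X]) ^ m - 1,
        X ^ 3 + C (2 * (n : ℤ) - 1) * X ^ 2 - C ((n : ℤ) + 2) * X + 1}) :
    Ideal.span {(X : ℤ[X]) ^ m - 1,
        X ^ 3 + C (2 * (n : ℤ) - 1) * X ^ 2 - C ((n : ℤ) + 2) * X + 1} =
      Ideal.span {((X : ℤ[X]) - 1) ^ 2, C (m : ℤ) * (X - 1),
        C (3 * (n : ℤ) - 1) * (X - 1) + C ((n : ℤ) - 1)} := by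
  set c : ℤ := (n : ℤ) with hc
  set ξ : ℤ[X] := X ^ 3 + C (2 * c - 1) * X ^ 2 - C (c + 2) * X + 1 with hξ
  set A : ℤ[X] := ((1 : ℤ[X]) - C c * X) ^ 2 with hA
  obtain ⟨q, hq⟩ := pow_sub_one_key m
  set g1 : ℤ[X] := ((X : ℤ[X]) - 1) ^ 2 with hg1
  set g2 : ℤ[X] := C (m : ℤ) * (X - 1) with hg2
  set g3 : ℤ[X] := C (3 * c - 1) * (X - 1) + C (c - 1) with hg3
  -- ξ decomposes along (X-1)
  have hxi : ξ = g1 * (X - 1 + C (2 * c + 2)) + g3 := by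
    rw [hξ, hg1, hg3]
    simp only [map_add, map_sub, map_mul, map_one, map_ofNat, C_1]
    push_cast
    ring
  -- the Bézout-type certificate : (X-1)^2 = u * A + v * ξ
  have hcert : g1 =
      (C (2*c - 2*c^2 + 2*c^3 - c^4) + C (2*c - 3*c^2 + 3*c^3 - 2*c^4) * (X - 1)
        + C (1 - 2*c + 2*c^2 - c^3) * (X - 1) ^ 2) * A
      + (C (2*c - 4*c^2 + 4*c^3 - 3*c^4 + c^5) + C (-c^2 + 2*c^3 - 2*c^4 + c^5) * (X - 1)) * ξ := by
    rw [hg1, hA, hξ]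
    simp only [map_add, map_sub, map_mul, map_pow, map_one, map_neg, map_ofNat, C_1]
    push_cast
    ring
  have memI : ∀ p : ℤ[X], p ∈ ({(X : ℤ[X]) ^ m - 1, ξ} : Set ℤ[X]) →
      p ∈ Ideal.span {(X : ℤ[X]) ^ m - 1, ξ} := fun p hp => Ideal.subset_span hp
  have hXm : (X : ℤ[X]) ^ m - 1 ∈ Ideal.span {(X : ℤ[X]) ^ m - 1, ξ} :=
    memI _ (Set.mem_insert _ _)
  have hξmem : ξ ∈ Ideal.span {(X : ℤ[X]) ^ m - 1, ξ} :=
    memI _ (Set.mem_insert_of_mem _ rfl)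
  have memJ : ∀ p : ℤ[X], p ∈ ({g1, g2, g3} : Set ℤ[X]) →
      p ∈ Ideal.span {g1, g2, g3} := fun p hp => Ideal.subset_span hp
  have hg1mem : g1 ∈ Ideal.span {g1, g2, g3} := memJ _ (Set.mem_insert _ _)
  have hg2mem : g2 ∈ Ideal.span {g1, g2, g3} :=
    memJ _ (Set.mem_insert_of_mem _ (Set.mem_insert _ _))
  have hg3mem : g3 ∈ Ideal.span {g1, g2, g3} :=
    memJ _ (Set.mem_insert_of_mem _ (Set.mem_insert_of_mem _ rfl))
  -- (X-1)^2 ∈ I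
  have hg1I : g1 ∈ Ideal.span {(X : ℤ[X]) ^ m - 1, ξ} := by
    rw [hcert]
    exact add_mem (Ideal.mul_mem_left _ _ h) (Ideal.mul_mem_left _ _ hξmem)
  apply le_antisymm
  · rw [Ideal.span_le]
    rintro p hp
    rcases hp with rfl | hp
    · -- X^m - 1 ∈ J
      rw [hq]
      exact add_mem hg2mem (Ideal.mul_mem_right _ _ hg1mem)
    · rcases hp with rfl
      -- ξ ∈ J
      rw [hxi]
      exact add_mem (Ideal.mul_mem_right _ _ hg1mem) hg3mem
  · rw [Ideal.span_le]
    rintro p hp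
    rcases hp with rfl | hp
    · exact hg1I
    rcases hp with rfl | hp
    · -- m * (X - 1) ∈ I
      have : g2 = ((X : ℤ[X]) ^ m - 1) - g1 * q := by rw [hq, hg1]; ring
      rw [this]
      exact sub_mem hXm (Ideal.mul_mem_right _ _ hg1I)
    rcases hp with rfl
    -- third generator ∈ I
    have : g3 = ξ - g1 * (X - 1 + C (2 * c + 2)) := by rw [hxi]; ring
    rw [this]
    exact sub_mem hξmem (Ideal.mul_mem_right _ _ hg1I)
end

section
/- Let n, m ≥ 2 with gcd(m, n-1) = 1, and suppose the ideal I of ℤ[x] equals ⟨(x-1)², m(x-1), (3n-1)(x-1) + (n-1)⟩. Then I = ⟨x - 1, n - 1⟩, and consequently ℤ[x]/I ≅ ℤ/(n-1)ℤ as abelian groups. -/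
open Polynomial

theorem coprime_case (n m : ℕ) (hn : 2 ≤ n) (hm : 2 ≤ m) (hcop : Nat.Coprime m (n - 1))
    (I : Ideal ℤ[X])
    (hI : I = Ideal.span {((X : ℤ[X]) - 1) ^ 2, C (m : ℤ) * (X - 1),
      C (3 * (n : ℤ) - 1) * (X - 1) + C ((n : ℤ) - 1)}) :
    I = Ideal.span {(X : ℤ[X]) - 1, C ((n : ℤ) - 1)} ∧
      Nonempty ((ℤ[X] ⧸ I) ≃+ ZMod (n - 1)) := by
  have hcast : ((n - 1 : ℕ) : ℤ) = (n : ℤ) - 1 := by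
    have h1 : 1 ≤ n := by omega
    push_cast [h1]; ring
  have hg1 : ((X : ℤ[X]) - 1) ^ 2 ∈ I := by
    rw [hI]; exact Ideal.subset_span (by simp)
  have hg2 : C (m : ℤ) * (X - 1) ∈ I := by
    rw [hI]; exact Ideal.subset_span (by simp)
  have hg3 : C (3 * (n : ℤ) - 1) * (X - 1) + C ((n : ℤ) - 1) ∈ I := by
    rw [hI]; exact Ideal.subset_span (by simp)
  have hn1X : C ((n : ℤ) - 1) * (X - 1) ∈ I := by
    have heq : C ((n : ℤ) - 1) * (X - 1)
        = (X - 1) * (C (3 * (n : ℤ) - 1) * (X - 1) + C ((n : ℤ) - 1))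
          - C (3 * (n : ℤ) - 1) * (((X : ℤ[X]) - 1) ^ 2) := by
      simp only [map_sub, map_mul, map_add, map_one, map_ofNat]
      push_cast
      ring
    rw [heq]
    exact sub_mem (I.mul_mem_left _ hg3) (I.mul_mem_left _ hg1)
  have hco : IsCoprime (m : ℤ) ((n : ℤ) - 1) := by
    rw [← hcast]
    exact Nat.isCoprime_iff_coprime.mpr hcop
  obtain ⟨a, b, hab⟩ := hco
  have hX1 : (X : ℤ[X]) - 1 ∈ I := by
    have heq : (X : ℤ[X]) - 1
        = C a * (C (m : ℤ) * (X - 1)) + C b * (C ((n : ℤ) - 1) * (X - 1)) := by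
      have h2 : C a * (C (m : ℤ) * (X - 1)) + C b * (C ((n : ℤ) - 1) * (X - 1))
          = C (a * m + b * ((n : ℤ) - 1)) * ((X : ℤ[X]) - 1) := by
        rw [map_add, map_mul, map_mul]; ring
      rw [h2, hab, map_one, one_mul]
    rw [heq]
    exact add_mem (I.mul_mem_left _ hg2) (I.mul_mem_left _ hn1X)
  have hCn : C ((n : ℤ) - 1) ∈ I := by
    have heq : C ((n : ℤ) - 1)
        = (C (3 * (n : ℤ) - 1) * (X - 1) + C ((n : ℤ) - 1))
          - C (3 * (n : ℤ) - 1) * ((X : ℤ[X]) - 1) := by ring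
    rw [heq]
    exact sub_mem hg3 (I.mul_mem_left _ hX1)
  have hIJ : I = Ideal.span {(X : ℤ[X]) - 1, C ((n : ℤ) - 1)} := by
    apply le_antisymm
    · rw [hI]
      apply Ideal.span_le.mpr
      rintro p hp
      simp only [Set.mem_insert_iff, Set.mem_singleton_iff] at hp
      have hu : (X : ℤ[X]) - 1 ∈ Ideal.span {(X : ℤ[X]) - 1, C ((n : ℤ) - 1)} :=
        Ideal.subset_span (by simp)
      have hv : C ((n : ℤ) - 1) ∈ Ideal.span {(X : ℤ[X]) - 1, C ((n : ℤ) - 1)} :=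
        Ideal.subset_span (by simp)
      rcases hp with h | h | h <;> subst h
      · rw [sq]; exact Ideal.mul_mem_left _ _ hu
      · exact Ideal.mul_mem_left _ _ hu
      · exact add_mem (Ideal.mul_mem_left _ _ hu) hv
    · apply Ideal.span_le.mpr
      rintro p hp
      simp only [Set.mem_insert_iff, Set.mem_singleton_iff] at hp
      rcases hp with h | h <;> subst h
      · exact hX1
      · exact hCn
  refine ⟨hIJ, ?_⟩
  set φ : ℤ[X] →+* ZMod (n - 1) :=
    (Int.castRingHom (ZMod (n - 1))).comp (evalRingHom (1 : ℤ)) with hφ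
  have hker : RingHom.ker φ = I := by
    rw [hIJ]
    apply le_antisymm
    · intro p hp
      have h0 : ((p.eval 1 : ℤ) : ZMod (n - 1)) = 0 := hp
      have hdvd : ((n - 1 : ℕ) : ℤ) ∣ p.eval 1 :=
        (ZMod.intCast_zmod_eq_zero_iff_dvd _ _).mp h0
      obtain ⟨c, hc⟩ := hdvd
      have hsplit : p = (p - C (p.eval 1)) + C ((n : ℤ) - 1) * C c := by
        rw [← map_mul, ← hcast, ← hc]; ring
      rw [hsplit]
      apply add_mem
      · obtain ⟨q, hq⟩ := Polynomial.X_sub_C_dvd_sub_C_eval (a := (1 : ℤ)) (p := p)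
        have h3 : p - C (p.eval 1) = ((X : ℤ[X]) - 1) * q := by rw [hq]; norm_num
        rw [h3]
        exact Ideal.mul_mem_right _ _ (Ideal.subset_span (by simp))
      · exact Ideal.mul_mem_right _ _ (Ideal.subset_span (by simp))
    · apply Ideal.span_le.mpr
      rintro p hp
      simp only [Set.mem_insert_iff, Set.mem_singleton_iff] at hp
      rcases hp with h | h <;> subst h
      · show ((((X : ℤ[X]) - 1).eval 1 : ℤ) : ZMod (n - 1)) = 0
        simp
      · show (((C ((n : ℤ) - 1)).eval 1 : ℤ) : ZMod (n - 1)) = 0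
        rw [eval_C, ← hcast]
        simp
  have hsurj : Function.Surjective φ := by
    intro z
    obtain ⟨k, hk⟩ := ZMod.intCast_surjective z
    exact ⟨C k, by simp [hφ, hk]⟩
  exact ⟨((Ideal.quotEquivOfEq hker.symm).trans
    (RingHom.quotientKerEquivOfSurjective hsurj)).toAddEquiv⟩
end

section
/- Let m = 2b+1 be an odd prime, a ≥ 1, and n = am + 1. Then the ideal ⟨(x-1)², m(x-1), 2(x-1) + am⟩ of ℤ[x] equals ⟨am², x - (1 + abm)⟩, and the quotient ℤ[x]/⟨am², x - (1+abm)⟩ is isomorphic as an abelian group to ℤ/am²ℤ. -/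
open Polynomial

theorem odd_prime_case (m a b : ℕ) (hm : Nat.Prime m) (hb : 1 ≤ b) (hmb : m = 2 * b + 1)
    (ha : 1 ≤ a) :
    Ideal.span {((X : ℤ[X]) - 1) ^ 2, C (m : ℤ) * (X - 1),
        2 * (X - 1) + C ((a : ℤ) * m)} =
      Ideal.span {(C ((a : ℤ) * m ^ 2) : ℤ[X]), X - C (1 + (a : ℤ) * b * m)} ∧
    Nonempty ((ℤ[X] ⧸ Ideal.span {(C ((a : ℤ) * m ^ 2) : ℤ[X]),
        X - C (1 + (a : ℤ) * b * m)}) ≃+ ZMod (a * m ^ 2)) := by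
  have hM : (m : ℤ) = 2 * b + 1 := by exact_mod_cast hmb
  constructor
  · apply le_antisymm
    · rw [Ideal.span_le]
      intro p hp
      simp only [Set.mem_insert_iff, Set.mem_singleton_iff] at hp
      rcases hp with h | h | h <;> subst h <;> rw [SetLike.mem_coe, Ideal.mem_span_pair]
      · exact ⟨C ((a : ℤ) * b ^ 2), X - 1 + C ((a : ℤ) * b * m), by
          simp only [map_mul, map_add, map_one, map_pow, map_ofNat]; ring⟩
      · exact ⟨C (b : ℤ), C (m : ℤ), by
          simp only [map_mul, map_add, map_one, map_pow, map_ofNat]; ring⟩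
      · exact ⟨1, 2, by
          simp only [map_mul, map_add, map_one, map_pow, map_ofNat, hM]; ring⟩
    · rw [Ideal.span_le]
      intro p hp
      have h1 : ((X : ℤ[X]) - 1) ^ 2 ∈ Ideal.span {((X : ℤ[X]) - 1) ^ 2,
          C (m : ℤ) * (X - 1), 2 * (X - 1) + C ((a : ℤ) * m)} :=
        Ideal.subset_span (by simp)
      have h2 : C (m : ℤ) * (X - 1) ∈ Ideal.span {((X : ℤ[X]) - 1) ^ 2,
          C (m : ℤ) * (X - 1), 2 * (X - 1) + C ((a : ℤ) * m)} :=
        Ideal.subset_span (by simp)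
      have h3 : 2 * ((X : ℤ[X]) - 1) + C ((a : ℤ) * m) ∈ Ideal.span {((X : ℤ[X]) - 1) ^ 2,
          C (m : ℤ) * (X - 1), 2 * (X - 1) + C ((a : ℤ) * m)} :=
        Ideal.subset_span (by simp)
      simp only [SetLike.mem_coe, Set.mem_insert_iff, Set.mem_singleton_iff] at hp ⊢
      rcases hp with h | h <;> subst h
      · have := Ideal.add_mem _ (Ideal.mul_mem_left _ (C (m : ℤ)) h3)
          (Ideal.mul_mem_left _ (-2) h2)
        convert this using 1
        simp only [map_mul, map_add, map_one, map_pow, map_ofNat]; ring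
      · have := Ideal.add_mem _ h2 (Ideal.mul_mem_left _ (-C (b : ℤ)) h3)
        convert this using 1
        simp only [map_mul, map_add, map_one, map_pow, map_ofNat, hM]; ring
  · have e1 := (Polynomial.quotientSpanCXSubCAlgEquiv ((a : ℤ) * m ^ 2)
      (1 + (a : ℤ) * b * m)).toRingEquiv.toAddEquiv
    have hcast : ((a * m ^ 2 : ℕ) : ℤ) = (a : ℤ) * m ^ 2 := by push_cast; ring
    have e2 : (ℤ ⧸ Ideal.span {((a : ℤ) * m ^ 2)}) ≃+ ZMod (a * m ^ 2) := by
      rw [← hcast]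
      exact (Int.quotientSpanNatEquivZMod (a * m ^ 2)).toAddEquiv
    exact ⟨e1.trans e2⟩
end
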